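/- arXiv:1710.01374 — 4 statements merged into one kernel-verified Lean document; each statement's English description precedes it below -/
import Mathlib

section
/- Let χ : [n] → {•, ∘} with χ(1) = χ(n) = ∘, and let l1 be the second-smallest element of χ^{-1}(∘). If π ∈ INC(χ) and V is the block of π containing l1, then the restriction of π to {1,...,l1} consists exactly of the blocks of π entirely contained in {1,...,l1-1} together with the set W = {t ∈ V : t ≤ l1}; in particular every block of π either lies entirely in {1,...,l1-1}, lies entirely in {l1+1,...,n}, or contains l1. -/
open scoped Classical

section Defs

variable {α : Type*}

/-- `P` is a partition of the finite set `S`: blocks are nonempty subsets of `S`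
and every element of `S` lies in a unique block. -/
def IsPartitionOn (S : Finset α) (P : Finset (Finset α)) : Prop :=
  (∀ B ∈ P, B.Nonempty ∧ B ⊆ S) ∧ ∀ x ∈ S, ∃! B, B ∈ P ∧ x ∈ B

/-- `P` is noncrossing: no `s₁ < r₁ < s₂ < r₂` with `s₁, s₂` in one block and
`r₁, r₂` in a different block. -/
def Noncrossing [LinearOrder α] (P : Finset (Finset α)) : Prop :=
  ∀ V ∈ P, ∀ W ∈ P, V ≠ W →
    ¬ ∃ s₁ r₁ s₂ r₂, s₁ ∈ V ∧ s₂ ∈ V ∧ r₁ ∈ W ∧ r₂ ∈ W ∧ s₁ < r₁ ∧ r₁ < s₂ ∧ s₂ < r₂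

/-- A block `V` is inner if some other block `W` has elements `s, t` with
`s < v < t` for all `v ∈ V`. -/
def IsInnerBlock [LinearOrder α] (P : Finset (Finset α)) (V : Finset α) : Prop :=
  ∃ W ∈ P, W ≠ V ∧ ∃ s ∈ W, ∃ t ∈ W, ∀ v ∈ V, s < v ∧ v < t

/-- `P` is an interval partition: no `s₁ < r < s₂` with `s₁, s₂` in one block
and `r` in a different block. -/
def IsIntervalPartition [LinearOrder α] (P : Finset (Finset α)) : Prop :=
  ∀ V ∈ P, ∀ W ∈ P, V ≠ W →
    ¬ ∃ s₁ r s₂, s₁ ∈ V ∧ s₂ ∈ V ∧ r ∈ W ∧ s₁ < r ∧ r < s₂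

/-- Reversed refinement order: every block of `P` is contained in a block of `Q`. -/
def Refines (P Q : Finset (Finset α)) : Prop := ∀ B ∈ P, ∃ C ∈ Q, B ⊆ C

/-- Noncrossing partition of the finite ordered set `S`. -/
def NCOn [LinearOrder α] (S : Finset α) (P : Finset (Finset α)) : Prop :=
  IsPartitionOn S P ∧ Noncrossing P

/-- Interval-noncrossing partition of `S` w.r.t. the coloring `χ`
(`χ k = true` means `k` is colored `∘`): a noncrossing partition such that
no `∘`-colored element lies in an inner block. -/
def INCOn [LinearOrder α] (S : Finset α) (χ : α → Bool) (P : Finset (Finset α)) : Prop :=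
  IsPartitionOn S P ∧ Noncrossing P ∧
    ∀ V ∈ P, IsInnerBlock P V → ∀ k ∈ V, χ k = false

/-- Restriction of a partition to a subset: nonempty intersections of blocks with `A`. -/
def restrictPart [DecidableEq α] (P : Finset (Finset α)) (A : Finset α) : Finset (Finset α) :=
  (P.image (· ∩ A)).filter (·.Nonempty)

end Defs

/-- for π ∈ INC(χ) with χ(1) = χ(n) = ∘ and l₁ the second smallest
∘-colored element, the restriction of π to {1,...,l₁} consists of the blocks of π
contained in {1,...,l₁-1} together with W = {t ∈ V : t ≤ l₁}, where V is the block
containing l₁; in particular every block of π lies below l₁, lies above l₁, or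
contains l₁. -/
theorem restriction_at_second_circ {n : ℕ} (hn : 0 < n) (χ : Fin n → Bool)
    (hχ1 : χ ⟨0, hn⟩ = true) (hχn : χ ⟨n - 1, Nat.sub_lt hn one_pos⟩ = true)
    (l₁ : Fin n) (hl₁pos : 0 < l₁.val) (hl₁ : χ l₁ = true)
    (hsecond : ∀ k : Fin n, 0 < k.val → k < l₁ → χ k = false)
    (π : Finset (Finset (Fin n))) (hπ : INCOn Finset.univ χ π)
    (V : Finset (Fin n)) (hV : V ∈ π) (hl₁V : l₁ ∈ V) :
    restrictPart π (Finset.Iic l₁) =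
      (π.filter (fun B => ∀ x ∈ B, x < l₁)) ∪ {V ∩ Finset.Iic l₁} ∧
    ∀ B ∈ π, (∀ x ∈ B, x < l₁) ∨ (∀ x ∈ B, l₁ < x) ∨ l₁ ∈ B := by
  obtain ⟨⟨hblocks, huniq⟩, hnc, hinner⟩ := hπ
  have hVuniq : ∀ B ∈ π, l₁ ∈ B → B = V := fun B hB h =>
    (huniq l₁ (Finset.mem_univ _)).unique ⟨hB, h⟩ ⟨hV, hl₁V⟩
  have tri : ∀ B ∈ π, (∀ x ∈ B, x < l₁) ∨ (∀ x ∈ B, l₁ < x) ∨ l₁ ∈ B := by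
    intro B hB
    by_cases hmem : l₁ ∈ B
    · exact Or.inr (Or.inr hmem)
    have hBV : B ≠ V := fun h => hmem (h ▸ hl₁V)
    by_cases hall : ∀ x ∈ B, x < l₁
    · exact Or.inl hall
    right; left
    push_neg at hall
    obtain ⟨y, hyB, hy⟩ := hall
    have hy' : l₁ < y := lt_of_le_of_ne hy (fun e => hmem (e ▸ hyB))
    intro x hxB
    by_contra hx
    push_neg at hx
    have hx' : x < l₁ := lt_of_le_of_ne hx (fun e => hmem (e ▸ hxB))
    have claim : ∀ v ∈ V, x < v ∧ v < y := by
      intro v hv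
      constructor
      · by_contra h
        push_neg at h
        have hvx : v < x := lt_of_le_of_ne h (fun e => hBV
          ((huniq x (Finset.mem_univ _)).unique ⟨hB, hxB⟩ ⟨hV, e ▸ hv⟩))
        exact hnc V hV B hB (Ne.symm hBV) ⟨v, x, l₁, y, hv, hl₁V, hxB, hyB, hvx, hx', hy'⟩
      · by_contra h
        push_neg at h
        have hyv : y < v := lt_of_le_of_ne h (fun e => hBV
          ((huniq y (Finset.mem_univ _)).unique ⟨hB, hyB⟩ ⟨hV, e ▸ hv⟩))
        exact hnc B hB V hV hBV ⟨x, l₁, y, v, hxB, hyB, hl₁V, hv, hx', hy', hyv⟩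
    have : χ l₁ = false :=
      hinner V hV ⟨B, hB, hBV, x, hxB, y, hyB, claim⟩ l₁ hl₁V
    simp [hl₁] at this
  refine ⟨?_, tri⟩
  ext C
  simp only [restrictPart, Finset.mem_filter, Finset.mem_image, Finset.mem_union,
    Finset.mem_singleton]
  constructor
  · rintro ⟨⟨B, hB, rfl⟩, hne⟩
    rcases tri B hB with hlt | hgt | hmem
    · left
      have hBeq : B ∩ Finset.Iic l₁ = B := by
        apply Finset.inter_eq_left.mpr
        intro x hx
        exact Finset.mem_Iic.mpr (le_of_lt (hlt x hx))
      rw [hBeq]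
      exact ⟨hB, hlt⟩
    · obtain ⟨x, hx⟩ := hne
      rw [Finset.mem_inter, Finset.mem_Iic] at hx
      exact absurd hx.2 (not_le.mpr (hgt x hx.1))
    · right; rw [hVuniq B hB hmem]
  · rintro (hB | rfl)
    · have hCeq : C ∩ Finset.Iic l₁ = C := by
        apply Finset.inter_eq_left.mpr
        intro x hx
        exact Finset.mem_Iic.mpr (le_of_lt (hB.2 x hx))
      exact ⟨⟨C, hB.1, hCeq⟩, (hblocks C hB.1).1⟩
    · exact ⟨⟨V, hV, rfl⟩, ⟨l₁, Finset.mem_inter.mpr ⟨hl₁V, Finset.mem_Iic.mpr le_rfl⟩⟩⟩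
end

section
/- Let χ : [n] → {•, ∘} with χ(1) = χ(n) = ∘ and χ^{-1}(∘) = {1 = l0 < l1 < ... < lm = n}, m ≥ 2. The map α'_1 sending π ∈ INC(χ) to the pair (π|_{[1,l1]}, π|_{[l1,n]}) of its restrictions is an order isomorphism from INC(χ) (with the reversed refinement order) onto NC([1,l1]) × INC(χ'), where χ' is the restriction of χ to [l1,n] and the product carries the componentwise order. -/
open scoped Classical

section Helpers

variable {α : Type*} [DecidableEq α]

lemma mem_restrictPart {P : Finset (Finset α)} {A V : Finset α} :
    V ∈ restrictPart P A ↔ (∃ B ∈ P, B ∩ A = V) ∧ V.Nonempty := by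
  simp [restrictPart]

lemma blocks_eq {S : Finset α} {P : Finset (Finset α)} (hP : IsPartitionOn S P)
    {B C : Finset α} (hB : B ∈ P) (hC : C ∈ P) {x : α} (hxB : x ∈ B) (hxC : x ∈ C) :
    B = C := by
  have hxS : x ∈ S := (hP.1 B hB).2 hxB
  obtain ⟨D, _, huniq⟩ := hP.2 x hxS
  rw [huniq B ⟨hB, hxB⟩, huniq C ⟨hC, hxC⟩]

lemma restrict_isPartitionOn {S A : Finset α} {P : Finset (Finset α)}
    (hP : IsPartitionOn S P) (hA : A ⊆ S) :
    IsPartitionOn A (restrictPart P A) := by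
  constructor
  · intro V hV
    rw [mem_restrictPart] at hV
    refine ⟨hV.2, ?_⟩
    obtain ⟨B, _, rfl⟩ := hV.1
    exact Finset.inter_subset_right
  · intro x hx
    obtain ⟨B, ⟨hB, hxB⟩, _⟩ := hP.2 x (hA hx)
    have hxBA : x ∈ B ∩ A := Finset.mem_inter.2 ⟨hxB, hx⟩
    refine ⟨B ∩ A, ⟨mem_restrictPart.2 ⟨⟨B, hB, rfl⟩, ⟨x, hxBA⟩⟩, hxBA⟩, ?_⟩
    rintro W ⟨hW, hxW⟩
    rw [mem_restrictPart] at hW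
    obtain ⟨⟨C, hC, rfl⟩, -⟩ := hW
    have hxC : x ∈ C := (Finset.mem_inter.1 hxW).1
    rw [blocks_eq hP hC hB hxC hxB]

lemma restrict_noncrossing [LinearOrder α] {P : Finset (Finset α)} {A : Finset α}
    (hNC : Noncrossing P) : Noncrossing (restrictPart P A) := by
  intro V hV W hW hVW h
  obtain ⟨s₁, r₁, s₂, r₂, hs₁, hs₂, hr₁, hr₂, h1, h2, h3⟩ := h
  rw [mem_restrictPart] at hV hW
  obtain ⟨⟨B, hB, rfl⟩, -⟩ := hV
  obtain ⟨⟨C, hC, rfl⟩, -⟩ := hW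
  have hBC : B ≠ C := fun h => hVW (by rw [h])
  exact hNC B hB C hC hBC ⟨s₁, r₁, s₂, r₂, (Finset.mem_inter.1 hs₁).1,
    (Finset.mem_inter.1 hs₂).1, (Finset.mem_inter.1 hr₁).1, (Finset.mem_inter.1 hr₂).1,
    h1, h2, h3⟩

lemma refines_restrict {P Q : Finset (Finset α)} (h : Refines P Q) (A : Finset α) :
    Refines (restrictPart P A) (restrictPart Q A) := by
  intro V hV
  rw [mem_restrictPart] at hV
  obtain ⟨⟨B, hB, rfl⟩, hne⟩ := hV
  obtain ⟨C, hC, hBC⟩ := h B hB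
  have hsub : B ∩ A ⊆ C ∩ A := fun x hx =>
    Finset.mem_inter.2 ⟨hBC (Finset.mem_inter.1 hx).1, (Finset.mem_inter.1 hx).2⟩
  exact ⟨C ∩ A, mem_restrictPart.2 ⟨⟨C, hC, rfl⟩, hne.mono hsub⟩, hsub⟩

end Helpers

/-- Every block of an INC partition not containing a `∘`-colored element `l₁`
lies entirely on one side of `l₁`. -/
lemma block_side {n : ℕ} {χ : Fin n → Bool} {π : Finset (Finset (Fin n))}
    (hπ : INCOn Finset.univ χ π) {l₁ : Fin n} (hl₁ : χ l₁ = true)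
    {B : Finset (Fin n)} (hB : B ∈ π) (hl : l₁ ∉ B) :
    B ⊆ Finset.Iic l₁ ∨ B ⊆ Finset.Ici l₁ := by
  by_contra h
  push_neg at h
  obtain ⟨t, htB, ht⟩ := Finset.not_subset.1 h.1
  obtain ⟨s, hsB, hs⟩ := Finset.not_subset.1 h.2
  rw [Finset.mem_Iic] at ht
  rw [Finset.mem_Ici] at hs
  push_neg at ht hs
  obtain ⟨V, ⟨hV, hlV⟩, -⟩ := hπ.1.2 l₁ (Finset.mem_univ l₁)
  have hVB : V ≠ B := fun h => hl (h ▸ hlV)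
  have inner : IsInnerBlock π V := by
    refine ⟨B, hB, hVB.symm, s, hsB, t, htB, fun v hvV => ?_⟩
    have hvB : v ∉ B := fun hvB => hVB (blocks_eq hπ.1 hV hB hvV hvB)
    constructor
    · by_contra hc
      push_neg at hc
      have hvs : v < s := lt_of_le_of_ne hc (fun h => hvB (h ▸ hsB))
      exact hπ.2.1 V hV B hB hVB ⟨v, s, l₁, t, hvV, hlV, hsB, htB, hvs, hs, ht⟩
    · by_contra hc
      push_neg at hc
      have htv : t < v := lt_of_le_of_ne hc (fun h => hvB (h ▸ htB))
      exact hπ.2.1 B hB V hV hVB.symm ⟨s, l₁, t, v, hsB, htB, hlV, hvV, hs, ht, htv⟩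
  exact absurd (hπ.2.2 V hV inner l₁ hlV) (by simp [hl₁])

lemma split_block {n : ℕ} (l₁ : Fin n) (B : Finset (Fin n)) :
    B = B ∩ Finset.Iic l₁ ∪ B ∩ Finset.Ici l₁ := by
  ext x
  simp only [Finset.mem_union, Finset.mem_inter, Finset.mem_Iic, Finset.mem_Ici]
  constructor
  · intro hx
    rcases le_total x l₁ with h | h
    · exact Or.inl ⟨hx, h⟩
    · exact Or.inr ⟨hx, h⟩
  · rintro (⟨hx, -⟩ | ⟨hx, -⟩) <;> exact hx

/-- the map π ↦ (π|_[1,l₁], π|_[l₁,n]) is an order isomorphism from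
INC(χ) onto NC([1,l₁]) × INC(χ'), where χ' is the restriction of χ to [l₁,n]. -/
theorem INC_orderIso_NC_prod_INC {n : ℕ} (hn : 0 < n) (χ : Fin n → Bool)
    (hχ1 : χ ⟨0, hn⟩ = true) (hχn : χ ⟨n - 1, Nat.sub_lt hn one_pos⟩ = true)
    (l₁ : Fin n) (hl₁pos : 0 < l₁.val) (hl₁lt : l₁.val < n - 1) (hl₁ : χ l₁ = true)
    (hsecond : ∀ k : Fin n, 0 < k.val → k < l₁ → χ k = false) :
    -- the map is well defined into NC([1,l₁]) × INC(χ')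
    (∀ π : Finset (Finset (Fin n)), INCOn Finset.univ χ π →
      NCOn (Finset.Iic l₁) (restrictPart π (Finset.Iic l₁)) ∧
      INCOn (Finset.Ici l₁) χ (restrictPart π (Finset.Ici l₁))) ∧
    -- injectivity
    (∀ π₁ π₂ : Finset (Finset (Fin n)), INCOn Finset.univ χ π₁ → INCOn Finset.univ χ π₂ →
      restrictPart π₁ (Finset.Iic l₁) = restrictPart π₂ (Finset.Iic l₁) →
      restrictPart π₁ (Finset.Ici l₁) = restrictPart π₂ (Finset.Ici l₁) → π₁ = π₂) ∧
    -- surjectivity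
    (∀ σ₁ σ₂ : Finset (Finset (Fin n)),
      NCOn (Finset.Iic l₁) σ₁ → INCOn (Finset.Ici l₁) χ σ₂ →
      ∃ π : Finset (Finset (Fin n)), INCOn Finset.univ χ π ∧
        restrictPart π (Finset.Iic l₁) = σ₁ ∧ restrictPart π (Finset.Ici l₁) = σ₂) ∧
    -- it and its inverse are order preserving
    (∀ π₁ π₂ : Finset (Finset (Fin n)), INCOn Finset.univ χ π₁ → INCOn Finset.univ χ π₂ →
      (Refines π₁ π₂ ↔
        Refines (restrictPart π₁ (Finset.Iic l₁)) (restrictPart π₂ (Finset.Iic l₁)) ∧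
        Refines (restrictPart π₁ (Finset.Ici l₁)) (restrictPart π₂ (Finset.Ici l₁)))) := by
  classical
  have hlIic : l₁ ∈ Finset.Iic l₁ := Finset.mem_Iic.2 le_rfl
  have hlIci : l₁ ∈ Finset.Ici l₁ := Finset.mem_Ici.2 le_rfl
  refine ⟨?_, ?_, ?_, ?_⟩
  · -- well-definedness
    intro π hπ
    refine ⟨⟨restrict_isPartitionOn hπ.1 (Finset.subset_univ _), restrict_noncrossing hπ.2.1⟩,
      restrict_isPartitionOn hπ.1 (Finset.subset_univ _), restrict_noncrossing hπ.2.1, ?_⟩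
    intro V' hV' hinner k hk
    obtain ⟨W', hW', hWV, s, hsW, t, htW, hst⟩ := hinner
    rw [mem_restrictPart] at hV' hW'
    obtain ⟨⟨V, hV, rfl⟩, hVne⟩ := hV'
    obtain ⟨⟨W, hW, rfl⟩, -⟩ := hW'
    have hsge : l₁ ≤ s := Finset.mem_Ici.1 (Finset.mem_inter.1 hsW).2
    have hlV' : l₁ ∉ V ∩ Finset.Ici l₁ := fun h => absurd (hst l₁ h).1 (not_lt.2 hsge)
    have hlV : l₁ ∉ V := fun h => hlV' (Finset.mem_inter.2 ⟨h, hlIci⟩)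
    have hVsub : V ⊆ Finset.Ici l₁ := by
      rcases block_side hπ hl₁ hV hlV with h | h
      · exfalso
        obtain ⟨x, hx⟩ := hVne
        have hx1 : x ∈ V := (Finset.mem_inter.1 hx).1
        have hx2 : l₁ ≤ x := Finset.mem_Ici.1 (Finset.mem_inter.1 hx).2
        have hx3 : x ≤ l₁ := Finset.mem_Iic.1 (h hx1)
        exact hlV (le_antisymm hx2 hx3 ▸ hx1)
      · exact h
    have hVeq : V ∩ Finset.Ici l₁ = V := Finset.inter_eq_left.2 hVsub
    have hinnerπ : IsInnerBlock π V := by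
      refine ⟨W, hW, fun h => hWV (by rw [h]), s, (Finset.mem_inter.1 hsW).1, t,
        (Finset.mem_inter.1 htW).1, fun v hv => hst v (hVeq.symm ▸ hv)⟩
    exact hπ.2.2 V hV hinnerπ k (Finset.mem_inter.1 hk).1
  · -- injectivity
    have sub : ∀ π₁ π₂ : Finset (Finset (Fin n)), INCOn Finset.univ χ π₁ →
        INCOn Finset.univ χ π₂ →
        restrictPart π₁ (Finset.Iic l₁) = restrictPart π₂ (Finset.Iic l₁) →
        restrictPart π₁ (Finset.Ici l₁) = restrictPart π₂ (Finset.Ici l₁) → π₁ ⊆ π₂ := by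
      intro π₁ π₂ h₁ h₂ e₁ e₂ B hB
      have hBne : B.Nonempty := (h₁.1.1 B hB).1
      by_cases hlB : l₁ ∈ B
      · have m1 : B ∩ Finset.Iic l₁ ∈ restrictPart π₂ (Finset.Iic l₁) := by
          rw [← e₁]
          exact mem_restrictPart.2 ⟨⟨B, hB, rfl⟩, ⟨l₁, Finset.mem_inter.2 ⟨hlB, hlIic⟩⟩⟩
        have m2 : B ∩ Finset.Ici l₁ ∈ restrictPart π₂ (Finset.Ici l₁) := by
          rw [← e₂]
          exact mem_restrictPart.2 ⟨⟨B, hB, rfl⟩, ⟨l₁, Finset.mem_inter.2 ⟨hlB, hlIci⟩⟩⟩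
        rw [mem_restrictPart] at m1 m2
        obtain ⟨⟨C, hC, hCeq⟩, -⟩ := m1
        obtain ⟨⟨D, hD, hDeq⟩, -⟩ := m2
        have hlC : l₁ ∈ C := by
          have : l₁ ∈ C ∩ Finset.Iic l₁ := hCeq.symm ▸ Finset.mem_inter.2 ⟨hlB, hlIic⟩
          exact (Finset.mem_inter.1 this).1
        have hlD : l₁ ∈ D := by
          have : l₁ ∈ D ∩ Finset.Ici l₁ := hDeq.symm ▸ Finset.mem_inter.2 ⟨hlB, hlIci⟩
          exact (Finset.mem_inter.1 this).1
        have hCD : C = D := blocks_eq h₂.1 hC hD hlC hlD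
        have hBC : B = C := by
          calc B = B ∩ Finset.Iic l₁ ∪ B ∩ Finset.Ici l₁ := split_block l₁ B
          _ = C ∩ Finset.Iic l₁ ∪ D ∩ Finset.Ici l₁ := by rw [hCeq, hDeq]
          _ = C ∩ Finset.Iic l₁ ∪ C ∩ Finset.Ici l₁ := by rw [hCD]
          _ = C := (split_block l₁ C).symm
        exact hBC ▸ hC
      · rcases block_side h₁ hl₁ hB hlB with hside | hside
        · have m1 : B ∈ restrictPart π₂ (Finset.Iic l₁) := by
            rw [← e₁]
            exact mem_restrictPart.2 ⟨⟨B, hB, Finset.inter_eq_left.2 hside⟩, hBne⟩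
          rw [mem_restrictPart] at m1
          obtain ⟨⟨C, hC, hCeq⟩, -⟩ := m1
          have hlC : l₁ ∉ C := fun h =>
            hlB (hCeq ▸ Finset.mem_inter.2 ⟨h, hlIic⟩)
          rcases block_side h₂ hl₁ hC hlC with h | h
          · have : C = B := by rw [← hCeq, Finset.inter_eq_left.2 h]
            exact this ▸ hC
          · exfalso
            obtain ⟨x, hx⟩ := hBne
            have hx1 : x ∈ C := (Finset.mem_inter.1 (hCeq.symm ▸ hx : x ∈ C ∩ Finset.Iic l₁)).1
            have hx2 : x ≤ l₁ := Finset.mem_Iic.1 (hside hx)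
            have hx3 : l₁ ≤ x := Finset.mem_Ici.1 (h hx1)
            exact hlB (le_antisymm hx2 hx3 ▸ hx)
        · have m1 : B ∈ restrictPart π₂ (Finset.Ici l₁) := by
            rw [← e₂]
            exact mem_restrictPart.2 ⟨⟨B, hB, Finset.inter_eq_left.2 hside⟩, hBne⟩
          rw [mem_restrictPart] at m1
          obtain ⟨⟨C, hC, hCeq⟩, -⟩ := m1
          have hlC : l₁ ∉ C := fun h =>
            hlB (hCeq ▸ Finset.mem_inter.2 ⟨h, hlIci⟩)
          rcases block_side h₂ hl₁ hC hlC with h | h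
          · exfalso
            obtain ⟨x, hx⟩ := hBne
            have hx1 : x ∈ C := (Finset.mem_inter.1 (hCeq.symm ▸ hx : x ∈ C ∩ Finset.Ici l₁)).1
            have hx2 : l₁ ≤ x := Finset.mem_Ici.1 (hside hx)
            have hx3 : x ≤ l₁ := Finset.mem_Iic.1 (h hx1)
            exact hlB (le_antisymm hx3 hx2 ▸ hx)
          · have : C = B := by rw [← hCeq, Finset.inter_eq_left.2 h]
            exact this ▸ hC
    intro π₁ π₂ h₁ h₂ e₁ e₂
    exact Finset.Subset.antisymm (sub π₁ π₂ h₁ h₂ e₁ e₂) (sub π₂ π₁ h₂ h₁ e₁.symm e₂.symm)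
  · -- surjectivity
    intro σ₁ σ₂ hσ₁ hσ₂
    obtain ⟨B₁, ⟨hB₁, hlB₁⟩, -⟩ := hσ₁.1.2 l₁ hlIic
    obtain ⟨B₂, ⟨hB₂, hlB₂⟩, -⟩ := hσ₂.1.2 l₁ hlIci
    have hσ₁sub : ∀ C ∈ σ₁, C ⊆ Finset.Iic l₁ := fun C hC => (hσ₁.1.1 C hC).2
    have hσ₂sub : ∀ C ∈ σ₂, C ⊆ Finset.Ici l₁ := fun C hC => (hσ₂.1.1 C hC).2
    have hleB₁ : ∀ x ∈ B₁, x ≤ l₁ := fun x hx => Finset.mem_Iic.1 (hσ₁sub B₁ hB₁ hx)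
    have hgeB₂ : ∀ x ∈ B₂, l₁ ≤ x := fun x hx => Finset.mem_Ici.1 (hσ₂sub B₂ hB₂ hx)
    set π : Finset (Finset (Fin n)) :=
      insert (B₁ ∪ B₂) (σ₁.erase B₁ ∪ σ₂.erase B₂) with hπdef
    have hmerged : B₁ ∪ B₂ ∈ π := by rw [hπdef]; exact Finset.mem_insert_self _ _
    have hmemσ₁ : ∀ C ∈ σ₁, C ≠ B₁ → C ∈ π := by
      intro C hC hne
      rw [hπdef]
      exact Finset.mem_insert_of_mem (Finset.mem_union_left _ (Finset.mem_erase.2 ⟨hne, hC⟩))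
    have hmemσ₂ : ∀ C ∈ σ₂, C ≠ B₂ → C ∈ π := by
      intro C hC hne
      rw [hπdef]
      exact Finset.mem_insert_of_mem (Finset.mem_union_right _ (Finset.mem_erase.2 ⟨hne, hC⟩))
    have memtype : ∀ C ∈ π, C = B₁ ∪ B₂ ∨ (C ∈ σ₁ ∧ C ⊆ Finset.Iic l₁ ∧ l₁ ∉ C) ∨
        (C ∈ σ₂ ∧ C ⊆ Finset.Ici l₁ ∧ l₁ ∉ C) := by
      intro C hC
      rw [hπdef, Finset.mem_insert, Finset.mem_union] at hC
      rcases hC with h | h | h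
      · exact Or.inl h
      · have hCσ := Finset.mem_of_mem_erase h
        have hne := Finset.ne_of_mem_erase h
        have hl : l₁ ∉ C := fun hl => hne (blocks_eq hσ₁.1 hCσ hB₁ hl hlB₁)
        exact Or.inr (Or.inl ⟨hCσ, hσ₁sub C hCσ, hl⟩)
      · have hCσ := Finset.mem_of_mem_erase h
        have hne := Finset.ne_of_mem_erase h
        have hl : l₁ ∉ C := fun hl => hne (blocks_eq hσ₂.1 hCσ hB₂ hl hlB₂)
        exact Or.inr (Or.inr ⟨hCσ, hσ₂sub C hCσ, hl⟩)
    -- uniqueness helper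
    have half : ∀ C, ((C ∈ σ₁ ∧ C ⊆ Finset.Iic l₁ ∧ l₁ ∉ C) ∨
        (C ∈ σ₂ ∧ C ⊆ Finset.Ici l₁ ∧ l₁ ∉ C)) → ∀ x, x ∈ B₁ ∪ B₂ → x ∈ C → False := by
      intro C hC x hx hxC
      rcases Finset.mem_union.1 hx with hx1 | hx2
      · rcases hC with ⟨hCσ, hCs, hlC⟩ | ⟨hCσ, hCs, hlC⟩
        · exact hlC ((blocks_eq hσ₁.1 hCσ hB₁ hxC hx1) ▸ hlB₁)
        · have hxl : x = l₁ := le_antisymm (hleB₁ x hx1) (Finset.mem_Ici.1 (hCs hxC))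
          exact hlC (hxl ▸ hxC)
      · rcases hC with ⟨hCσ, hCs, hlC⟩ | ⟨hCσ, hCs, hlC⟩
        · have hxl : x = l₁ := le_antisymm (Finset.mem_Iic.1 (hCs hxC)) (hgeB₂ x hx2)
          exact hlC (hxl ▸ hxC)
        · exact hlC ((blocks_eq hσ₂.1 hCσ hB₂ hxC hx2) ▸ hlB₂)
    have cross : ∀ D C, (D ∈ σ₁ ∧ D ⊆ Finset.Iic l₁ ∧ l₁ ∉ D) →
        (C ∈ σ₂ ∧ C ⊆ Finset.Ici l₁ ∧ l₁ ∉ C) → ∀ x, x ∈ D → x ∈ C → False := by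
      rintro D C ⟨-, hDs, hlD⟩ ⟨-, hCs, -⟩ x hxD hxC
      have hxl : x = l₁ := le_antisymm (Finset.mem_Iic.1 (hDs hxD)) (Finset.mem_Ici.1 (hCs hxC))
      exact hlD (hxl ▸ hxD)
    have uniq : ∀ D ∈ π, ∀ C ∈ π, ∀ x : Fin n, x ∈ D → x ∈ C → D = C := by
      intro D hD C hC x hxD hxC
      rcases memtype D hD with hD' | hD' | hD' <;> rcases memtype C hC with hC' | hC' | hC'
      · rw [hD', hC']
      · exact ((half C (Or.inl hC') x (hD' ▸ hxD) hxC)).elim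
      · exact ((half C (Or.inr hC') x (hD' ▸ hxD) hxC)).elim
      · exact ((half D (Or.inl hD') x (hC' ▸ hxC) hxD)).elim
      · exact blocks_eq hσ₁.1 hD'.1 hC'.1 hxD hxC
      · exact (cross D C hD' hC' x hxD hxC).elim
      · exact ((half D (Or.inr hD') x (hC' ▸ hxC) hxD)).elim
      · exact (cross C D hC' hD' x hxC hxD).elim
      · exact blocks_eq hσ₂.1 hD'.1 hC'.1 hxD hxC
    have hpart : IsPartitionOn Finset.univ π := by
      constructor
      · intro C hC
        refine ⟨?_, Finset.subset_univ C⟩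
        rcases memtype C hC with h | ⟨h, -, -⟩ | ⟨h, -, -⟩
        · exact ⟨l₁, h ▸ Finset.mem_union_left _ hlB₁⟩
        · exact (hσ₁.1.1 C h).1
        · exact (hσ₂.1.1 C h).1
      · rintro x -
        have hex : ∃ C ∈ π, x ∈ C := by
          rcases le_total x l₁ with hx | hx
          · obtain ⟨C, ⟨hC, hxC⟩, -⟩ := hσ₁.1.2 x (Finset.mem_Iic.2 hx)
            by_cases hCB : C = B₁
            · exact ⟨B₁ ∪ B₂, hmerged, Finset.mem_union_left _ (hCB ▸ hxC)⟩
            · exact ⟨C, hmemσ₁ C hC hCB, hxC⟩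
          · obtain ⟨C, ⟨hC, hxC⟩, -⟩ := hσ₂.1.2 x (Finset.mem_Ici.2 hx)
            by_cases hCB : C = B₂
            · exact ⟨B₁ ∪ B₂, hmerged, Finset.mem_union_right _ (hCB ▸ hxC)⟩
            · exact ⟨C, hmemσ₂ C hC hCB, hxC⟩
        obtain ⟨C, hC, hxC⟩ := hex
        refine ⟨C, ⟨hC, hxC⟩, ?_⟩
        rintro D ⟨hD, hxD⟩
        exact uniq D hD C hC x hxD hxC
    have hnc : Noncrossing π := by
      intro V hV W hW hVW hcr
      obtain ⟨s₁, r₁, s₂, r₂, hs₁, hs₂, hr₁, hr₂, h12, h23, h34⟩ := hcr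
      rcases memtype V hV with hV' | hV' | hV' <;> rcases memtype W hW with hW' | hW' | hW'
      · exact hVW (hV'.trans hW'.symm)
      · -- V merged, W in σ₁
        obtain ⟨hWσ, hWs, hlW⟩ := hW'
        have hr₂l : r₂ < l₁ :=
          lt_of_le_of_ne (Finset.mem_Iic.1 (hWs hr₂)) (fun h => hlW (h ▸ hr₂))
        have hs₁B : s₁ ∈ B₁ := by
          rcases Finset.mem_union.1 (hV' ▸ hs₁) with h | h
          · exact h
          · exact absurd (hgeB₂ s₁ h) (not_le.2 (h12.trans (h23.trans (h34.trans hr₂l))))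
        have hs₂B : s₂ ∈ B₁ := by
          rcases Finset.mem_union.1 (hV' ▸ hs₂) with h | h
          · exact h
          · exact absurd (hgeB₂ s₂ h) (not_le.2 (h34.trans hr₂l))
        have hne : B₁ ≠ W := fun h => hlW (h ▸ hlB₁)
        exact hσ₁.2 B₁ hB₁ W hWσ hne ⟨s₁, r₁, s₂, r₂, hs₁B, hs₂B, hr₁, hr₂, h12, h23, h34⟩
      · -- V merged, W in σ₂
        obtain ⟨hWσ, hWs, hlW⟩ := hW'
        have hr₁l : l₁ < r₁ :=
          lt_of_le_of_ne (Finset.mem_Ici.1 (hWs hr₁)) (fun h => hlW (h.symm ▸ hr₁))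
        have hs₂B : s₂ ∈ B₂ := by
          rcases Finset.mem_union.1 (hV' ▸ hs₂) with h | h
          · exact absurd (hleB₁ s₂ h) (not_le.2 (hr₁l.trans h23))
          · exact h
        have hne : B₂ ≠ W := fun h => hlW (h ▸ hlB₂)
        exact hσ₂.2.1 B₂ hB₂ W hWσ hne ⟨l₁, r₁, s₂, r₂, hlB₂, hs₂B, hr₁, hr₂, hr₁l, h23, h34⟩
      · -- V in σ₁, W merged
        obtain ⟨hVσ, hVs, hlV⟩ := hV'
        have hs₂l : s₂ < l₁ :=
          lt_of_le_of_ne (Finset.mem_Iic.1 (hVs hs₂)) (fun h => hlV (h ▸ hs₂))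
        have hr₁B : r₁ ∈ B₁ := by
          rcases Finset.mem_union.1 (hW' ▸ hr₁) with h | h
          · exact h
          · exact absurd (hgeB₂ r₁ h) (not_le.2 (h23.trans hs₂l))
        have hne : V ≠ B₁ := fun h => hlV (h.symm ▸ hlB₁)
        exact hσ₁.2 V hVσ B₁ hB₁ hne ⟨s₁, r₁, s₂, l₁, hs₁, hs₂, hr₁B, hlB₁, h12, h23, hs₂l⟩
      · -- V in σ₁, W in σ₁
        exact hσ₁.2 V hV'.1 W hW'.1 hVW ⟨s₁, r₁, s₂, r₂, hs₁, hs₂, hr₁, hr₂, h12, h23, h34⟩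
      · -- V in σ₁, W in σ₂
        exact absurd ((h23.trans_le (Finset.mem_Iic.1 (hV'.2.1 hs₂))).trans_le
          (Finset.mem_Ici.1 (hW'.2.1 hr₁))) (lt_irrefl r₁)
      · -- V in σ₂, W merged
        obtain ⟨hVσ, hVs, hlV⟩ := hV'
        have hs₁l : l₁ < s₁ :=
          lt_of_le_of_ne (Finset.mem_Ici.1 (hVs hs₁)) (fun h => hlV (h.symm ▸ hs₁))
        have hr₁B : r₁ ∈ B₂ := by
          rcases Finset.mem_union.1 (hW' ▸ hr₁) with h | h
          · exact absurd (hleB₁ r₁ h) (not_le.2 (hs₁l.trans h12))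
          · exact h
        have hr₂B : r₂ ∈ B₂ := by
          rcases Finset.mem_union.1 (hW' ▸ hr₂) with h | h
          · exact absurd (hleB₁ r₂ h)
              (not_le.2 (hs₁l.trans (h12.trans (h23.trans h34))))
          · exact h
        have hne : V ≠ B₂ := fun h => hlV (h.symm ▸ hlB₂)
        exact hσ₂.2.1 V hVσ B₂ hB₂ hne ⟨s₁, r₁, s₂, r₂, hs₁, hs₂, hr₁B, hr₂B, h12, h23, h34⟩
      · -- V in σ₂, W in σ₁
        exact absurd (h12.trans_le ((Finset.mem_Iic.1 (hW'.2.1 hr₁)).trans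
          (Finset.mem_Ici.1 (hV'.2.1 hs₁)))) (lt_irrefl s₁)
      · -- V in σ₂, W in σ₂
        exact hσ₂.2.1 V hV'.1 W hW'.1 hVW ⟨s₁, r₁, s₂, r₂, hs₁, hs₂, hr₁, hr₂, h12, h23, h34⟩
    have hinc : ∀ V ∈ π, IsInnerBlock π V → ∀ k ∈ V, χ k = false := by
      rintro V hV ⟨W, hW, hWV, s, hsW, t, htW, hst⟩ k hkV
      have hlV : l₁ ∉ V := by
        intro hl
        have hs := (hst l₁ hl).1
        have ht := (hst l₁ hl).2
        rcases memtype W hW with hW' | hW' | hW'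
        · rcases memtype V hV with hV' | hV' | hV'
          · exact hWV (hW'.trans hV'.symm)
          · exact hV'.2.2 hl
          · exact hV'.2.2 hl
        · exact absurd ht (not_lt.2 (Finset.mem_Iic.1 (hW'.2.1 htW)))
        · exact absurd hs (not_lt.2 (Finset.mem_Ici.1 (hW'.2.1 hsW)))
      rcases memtype V hV with hV' | hV' | hV'
      · exact absurd (hV'.symm ▸ Finset.mem_union_left _ hlB₁) hlV
      · obtain ⟨hVσ, hVs, -⟩ := hV'
        have hkl : k < l₁ :=
          lt_of_le_of_ne (Finset.mem_Iic.1 (hVs hkV)) (fun h => hlV (h ▸ hkV))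
        have hkpos : 0 < k.val := by
          have hsk : s < k := (hst k hkV).1
          exact Nat.lt_of_le_of_lt (Nat.zero_le _) (Fin.lt_def.mp hsk)
        exact hsecond k hkpos hkl
      · obtain ⟨hVσ, hVs, -⟩ := hV'
        have hinner2 : IsInnerBlock σ₂ V := by
          rcases memtype W hW with hW' | hW' | hW'
          · have hkl : l₁ < k :=
              lt_of_le_of_ne (Finset.mem_Ici.1 (hVs hkV)) (fun h => hlV (h.symm ▸ hkV))
            have htB : t ∈ B₂ := by
              rcases Finset.mem_union.1 (hW' ▸ htW) with h | h
              · exact absurd (hleB₁ t h) (not_le.2 (hkl.trans (hst k hkV).2))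
              · exact h
            have hne : B₂ ≠ V := fun h => hlV (h ▸ hlB₂)
            refine ⟨B₂, hB₂, hne, l₁, hlB₂, t, htB, fun v hv => ⟨?_, (hst v hv).2⟩⟩
            exact lt_of_le_of_ne (Finset.mem_Ici.1 (hVs hv)) (fun h => hlV (h.symm ▸ hv))
          · have hkl : l₁ < k :=
              lt_of_le_of_ne (Finset.mem_Ici.1 (hVs hkV)) (fun h => hlV (h.symm ▸ hkV))
            exact absurd ((hkl.trans (hst k hkV).2).trans_le
              (Finset.mem_Iic.1 (hW'.2.1 htW))) (lt_irrefl l₁)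
          · exact ⟨W, hW'.1, hWV, s, hsW, t, htW, hst⟩
        exact hσ₂.2.2 V hVσ hinner2 k hkV
    have hmIic : (B₁ ∪ B₂) ∩ Finset.Iic l₁ = B₁ := by
      ext x
      simp only [Finset.mem_inter, Finset.mem_union, Finset.mem_Iic]
      constructor
      · rintro ⟨h | h, hx⟩
        · exact h
        · exact (le_antisymm hx (hgeB₂ x h)).symm ▸ hlB₁
      · intro h
        exact ⟨Or.inl h, hleB₁ x h⟩
    have hmIci : (B₁ ∪ B₂) ∩ Finset.Ici l₁ = B₂ := by
      ext x
      simp only [Finset.mem_inter, Finset.mem_union, Finset.mem_Ici]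
      constructor
      · rintro ⟨h | h, hx⟩
        · exact (le_antisymm (hleB₁ x h) hx).symm ▸ hlB₂
        · exact h
      · intro h
        exact ⟨Or.inr h, hgeB₂ x h⟩
    have hre₁ : restrictPart π (Finset.Iic l₁) = σ₁ := by
      apply Finset.ext
      intro V
      rw [mem_restrictPart]
      constructor
      · rintro ⟨⟨C, hC, rfl⟩, hne⟩
        rcases memtype C hC with hC' | hC' | hC'
        · rw [hC', hmIic]; exact hB₁
        · rw [Finset.inter_eq_left.2 hC'.2.1]; exact hC'.1
        · exfalso
          obtain ⟨x, hx⟩ := hne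
          obtain ⟨hx1, hx2⟩ := Finset.mem_inter.1 hx
          have hxl : x = l₁ :=
            le_antisymm (Finset.mem_Iic.1 hx2) (Finset.mem_Ici.1 (hC'.2.1 hx1))
          exact hC'.2.2 (hxl ▸ hx1)
      · intro hV
        by_cases hVB : V = B₁
        · exact ⟨⟨B₁ ∪ B₂, hmerged, hmIic.trans hVB.symm⟩,
            hVB.symm ▸ (⟨l₁, hlB₁⟩ : B₁.Nonempty)⟩
        · exact ⟨⟨V, hmemσ₁ V hV hVB, Finset.inter_eq_left.2 (hσ₁sub V hV)⟩,
            (hσ₁.1.1 V hV).1⟩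
    have hre₂ : restrictPart π (Finset.Ici l₁) = σ₂ := by
      apply Finset.ext
      intro V
      rw [mem_restrictPart]
      constructor
      · rintro ⟨⟨C, hC, rfl⟩, hne⟩
        rcases memtype C hC with hC' | hC' | hC'
        · rw [hC', hmIci]; exact hB₂
        · exfalso
          obtain ⟨x, hx⟩ := hne
          obtain ⟨hx1, hx2⟩ := Finset.mem_inter.1 hx
          have hxl : x = l₁ :=
            le_antisymm (Finset.mem_Iic.1 (hC'.2.1 hx1)) (Finset.mem_Ici.1 hx2)
          exact hC'.2.2 (hxl ▸ hx1)
        · rw [Finset.inter_eq_left.2 hC'.2.1]; exact hC'.1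
      · intro hV
        by_cases hVB : V = B₂
        · exact ⟨⟨B₁ ∪ B₂, hmerged, hmIci.trans hVB.symm⟩,
            hVB.symm ▸ (⟨l₁, hlB₂⟩ : B₂.Nonempty)⟩
        · exact ⟨⟨V, hmemσ₂ V hV hVB, Finset.inter_eq_left.2 (hσ₂sub V hV)⟩,
            (hσ₂.1.1 V hV).1⟩
    exact ⟨π, ⟨hpart, hnc, hinc⟩, hre₁, hre₂⟩
  · -- order preserving
    intro π₁ π₂ h₁ h₂
    constructor
    · intro h
      exact ⟨refines_restrict h _, refines_restrict h _⟩
    · rintro ⟨r1, r2⟩ B hB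
      have hBne : B.Nonempty := (h₁.1.1 B hB).1
      by_cases hlB : l₁ ∈ B
      · have m1 : B ∩ Finset.Iic l₁ ∈ restrictPart π₁ (Finset.Iic l₁) :=
          mem_restrictPart.2 ⟨⟨B, hB, rfl⟩, ⟨l₁, Finset.mem_inter.2 ⟨hlB, hlIic⟩⟩⟩
        have m2 : B ∩ Finset.Ici l₁ ∈ restrictPart π₁ (Finset.Ici l₁) :=
          mem_restrictPart.2 ⟨⟨B, hB, rfl⟩, ⟨l₁, Finset.mem_inter.2 ⟨hlB, hlIci⟩⟩⟩
        obtain ⟨C', hC', hsub1⟩ := r1 _ m1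
        obtain ⟨D', hD', hsub2⟩ := r2 _ m2
        rw [mem_restrictPart] at hC' hD'
        obtain ⟨⟨C, hC, rfl⟩, -⟩ := hC'
        obtain ⟨⟨D, hD, rfl⟩, -⟩ := hD'
        have hlC : l₁ ∈ C :=
          (Finset.mem_inter.1 (hsub1 (Finset.mem_inter.2 ⟨hlB, hlIic⟩))).1
        have hlD : l₁ ∈ D :=
          (Finset.mem_inter.1 (hsub2 (Finset.mem_inter.2 ⟨hlB, hlIci⟩))).1
        have hCD : C = D := blocks_eq h₂.1 hC hD hlC hlD
        refine ⟨C, hC, fun x hx => ?_⟩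
        rcases le_total x l₁ with hxl | hxl
        · exact (Finset.mem_inter.1 (hsub1 (Finset.mem_inter.2 ⟨hx, Finset.mem_Iic.2 hxl⟩))).1
        · rw [hCD]
          exact (Finset.mem_inter.1 (hsub2 (Finset.mem_inter.2 ⟨hx, Finset.mem_Ici.2 hxl⟩))).1
      · rcases block_side h₁ hl₁ hB hlB with hside | hside
        · have m1 : B ∈ restrictPart π₁ (Finset.Iic l₁) :=
            mem_restrictPart.2 ⟨⟨B, hB, Finset.inter_eq_left.2 hside⟩, hBne⟩
          obtain ⟨C', hC', hsub1⟩ := r1 _ m1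
          rw [mem_restrictPart] at hC'
          obtain ⟨⟨C, hC, rfl⟩, -⟩ := hC'
          exact ⟨C, hC, hsub1.trans Finset.inter_subset_left⟩
        · have m2 : B ∈ restrictPart π₁ (Finset.Ici l₁) :=
            mem_restrictPart.2 ⟨⟨B, hB, Finset.inter_eq_left.2 hside⟩, hBne⟩
          obtain ⟨C', hC', hsub2⟩ := r2 _ m2
          rw [mem_restrictPart] at hC'
          obtain ⟨⟨C, hC, rfl⟩, -⟩ := hC'
          exact ⟨C, hC, hsub2.trans Finset.inter_subset_left⟩
end

section
/- Let χ : [n] → {•, ∘}, let π = {V1,...,Vt} ∈ INC(χ), and let σ be a partition of [n] with σ ≤ π. Then σ ∈ INC(χ) if and only if for every s = 1,...,t, the restriction σ|_{Vs} is interval-noncrossing with respect to the restricted coloring χ|_{Vs} on the ordered set Vs. -/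
open scoped Classical

lemma part_disjoint {α : Type*} {S : Finset α} {P : Finset (Finset α)}
    (h : IsPartitionOn S P) {B C : Finset α} (hB : B ∈ P) (hC : C ∈ P)
    (hne : B ≠ C) {x : α} (hxB : x ∈ B) (hxC : x ∈ C) : False := by
  have hxS : x ∈ S := (h.1 B hB).2 hxB
  obtain ⟨D, _, hD⟩ := h.2 x hxS
  exact hne ((hD B ⟨hB, hxB⟩).trans (hD C ⟨hC, hxC⟩).symm)

lemma block_subset {α : Type*} {S : Finset α} {π σ : Finset (Finset α)}
    (hπ : IsPartitionOn S π) (hle : Refines σ π) {B V : Finset α}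
    (hB : B ∈ σ) (hV : V ∈ π) {x : α} (hxB : x ∈ B) (hxV : x ∈ V) : B ⊆ V := by
  obtain ⟨C, hC, hBC⟩ := hle B hB
  have hCV : C = V := by
    by_contra hne
    exact part_disjoint hπ hC hV hne (hBC hxB) hxV
  exact hCV ▸ hBC

lemma mem_restrict_iff {α : Type*} [DecidableEq α] {S : Finset α} {π σ : Finset (Finset α)}
    (hσ : IsPartitionOn S σ) (hπ : IsPartitionOn S π) (hle : Refines σ π)
    {V : Finset α} (hV : V ∈ π) {C : Finset α} :
    C ∈ restrictPart σ V ↔ C ∈ σ ∧ C ⊆ V := by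
  constructor
  · intro hC
    simp only [restrictPart, Finset.mem_filter, Finset.mem_image] at hC
    obtain ⟨⟨B, hB, rfl⟩, x, hx⟩ := hC
    have hsub : B ⊆ V :=
      block_subset hπ hle hB hV (Finset.mem_inter.1 hx).1 (Finset.mem_inter.1 hx).2
    rw [Finset.inter_eq_left.2 hsub]
    exact ⟨hB, hsub⟩
  · rintro ⟨hC, hsub⟩
    simp only [restrictPart, Finset.mem_filter, Finset.mem_image]
    exact ⟨⟨C, hC, Finset.inter_eq_left.2 hsub⟩, (hσ.1 C hC).1⟩

/-- for π ∈ INC(χ) and a partition σ ≤ π, one has σ ∈ INC(χ) iff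
every restriction σ|_V to a block V of π is interval-noncrossing w.r.t. χ|_V. -/
theorem INC_iff_restrictions_INC {n : ℕ} (χ : Fin n → Bool)
    (π σ : Finset (Finset (Fin n)))
    (hπ : INCOn Finset.univ χ π)
    (hσ : IsPartitionOn Finset.univ σ) (hle : Refines σ π) :
    INCOn Finset.univ χ σ ↔ ∀ V ∈ π, INCOn V χ (restrictPart σ V) := by
  obtain ⟨hπP, hπNC, hπI⟩ := hπ
  constructor
  · rintro ⟨-, hσNC, hσI⟩ V hV
    refine ⟨⟨?_, ?_⟩, ?_, ?_⟩
    · intro B hB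
      obtain ⟨hBσ, hBV⟩ := (mem_restrict_iff hσ hπP hle hV).1 hB
      exact ⟨(hσ.1 B hBσ).1, hBV⟩
    · intro x hxV
      obtain ⟨B, ⟨hB, hxB⟩, hBu⟩ := hσ.2 x (Finset.mem_univ x)
      have hBV : B ⊆ V := block_subset hπP hle hB hV hxB hxV
      refine ⟨B, ⟨(mem_restrict_iff hσ hπP hle hV).2 ⟨hB, hBV⟩, hxB⟩, ?_⟩
      rintro C ⟨hC, hxC⟩
      exact hBu C ⟨((mem_restrict_iff hσ hπP hle hV).1 hC).1, hxC⟩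
    · intro B hB C hC hne hcr
      exact hσNC B ((mem_restrict_iff hσ hπP hle hV).1 hB).1
        C ((mem_restrict_iff hσ hπP hle hV).1 hC).1 hne hcr
    · rintro B hB ⟨C, hC, hne, s, hs, t, ht, hst⟩ k hk
      exact hσI B ((mem_restrict_iff hσ hπP hle hV).1 hB).1
        ⟨C, ((mem_restrict_iff hσ hπP hle hV).1 hC).1, hne, s, hs, t, ht, hst⟩ k hk
  · intro h
    refine ⟨hσ, ?_, ?_⟩
    · rintro B hB C hC hne ⟨s₁, r₁, s₂, r₂, hs₁, hs₂, hr₁, hr₂, h1, h2, h3⟩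
      obtain ⟨V, hV, hBV⟩ := hle B hB
      obtain ⟨W, hW, hCW⟩ := hle C hC
      by_cases hVW : V = W
      · subst hVW
        exact (h V hV).2.1 B ((mem_restrict_iff hσ hπP hle hV).2 ⟨hB, hBV⟩)
          C ((mem_restrict_iff hσ hπP hle hV).2 ⟨hC, hCW⟩) hne
          ⟨s₁, r₁, s₂, r₂, hs₁, hs₂, hr₁, hr₂, h1, h2, h3⟩
      · exact hπNC V hV W hW hVW
          ⟨s₁, r₁, s₂, r₂, hBV hs₁, hBV hs₂, hCW hr₁, hCW hr₂, h1, h2, h3⟩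
    · rintro B hB ⟨C, hC, hne, s, hs, t, ht, hst⟩ k hk
      obtain ⟨V, hV, hBV⟩ := hle B hB
      obtain ⟨W, hW, hCW⟩ := hle C hC
      by_cases hVW : V = W
      · subst hVW
        exact (h V hV).2.2 B ((mem_restrict_iff hσ hπP hle hV).2 ⟨hB, hBV⟩)
          ⟨C, (mem_restrict_iff hσ hπP hle hV).2 ⟨hC, hCW⟩, hne, s, hs, t, ht, hst⟩ k hk
      · -- V is inner in π, witnessed by W, s, t
        obtain ⟨b, hb⟩ := (hσ.1 B hB).1
        have hbV : b ∈ V := hBV hb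
        have hinner : IsInnerBlock π V := by
          refine ⟨W, hW, fun hWV => hVW hWV.symm, s, hCW hs, t, hCW ht, ?_⟩
          intro v hv
          have hvs : v ≠ s := fun hvs => part_disjoint hπP hV hW hVW hv (hvs ▸ hCW hs)
          have hvt : v ≠ t := fun hvt => part_disjoint hπP hV hW hVW hv (hvt ▸ hCW ht)
          constructor
          · by_contra hlt
            have hvs' : v < s := lt_of_le_of_ne (not_lt.1 hlt) hvs
            exact hπNC V hV W hW hVW
              ⟨v, s, b, t, hv, hbV, hCW hs, hCW ht, hvs', (hst b hb).1, (hst b hb).2⟩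
          · by_contra hlt
            have hvt' : t < v := lt_of_le_of_ne (not_lt.1 hlt) (Ne.symm hvt)
            exact hπNC W hW V hV (Ne.symm hVW)
              ⟨s, b, t, v, hCW hs, hCW ht, hbV, hv, (hst b hb).1, (hst b hb).2, hvt'⟩
        exact hπI V hV hinner k (hBV hk)
end

section
/- Let χ : [n] → {•, ∘} and π = {V1,...,Vt} ∈ INC(χ). Then the order interval [0_n, π] = {σ ∈ INC(χ) : σ ≤ π} is isomorphic as a poset to the product INC(χ|_{V1}) × ... × INC(χ|_{Vt}), via restricting σ to each block of π. -/
open scoped Classical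

section Helpers
variable {α : Type*} [LinearOrder α]

set_option linter.unusedSectionVars false in
lemma part_unique {S : Finset α} {P : Finset (Finset α)}
    (h : IsPartitionOn S P) {V W : Finset α} (hV : V ∈ P) (hW : W ∈ P)
    {x : α} (hxV : x ∈ V) (hxW : x ∈ W) : V = W := by
  have hxS : x ∈ S := (h.1 V hV).2 hxV
  obtain ⟨B, _, hB⟩ := h.2 x hxS
  rw [hB V ⟨hV, hxV⟩, hB W ⟨hW, hxW⟩]

lemma part_unique_of_subset {S : Finset α} {P : Finset (Finset α)}
    (h : IsPartitionOn S P) {V W B : Finset α} (hV : V ∈ P) (hW : W ∈ P)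
    (hB : B.Nonempty) (h1 : B ⊆ V) (h2 : B ⊆ W) : V = W := by
  obtain ⟨x, hx⟩ := hB
  exact part_unique h hV hW (h1 hx) (h2 hx)

lemma restrict_eq_filter [DecidableEq α] {S : Finset α} {σ π : Finset (Finset α)}
    (hσ : IsPartitionOn S σ) (hπ : IsPartitionOn S π) (hr : Refines σ π)
    {V : Finset α} (hV : V ∈ π) :
    restrictPart σ V = σ.filter (fun B => B ⊆ V) := by
  ext B
  simp only [restrictPart, Finset.mem_filter, Finset.mem_image]
  constructor
  · rintro ⟨⟨C, hC, rfl⟩, hne⟩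
    obtain ⟨x, hx⟩ := hne
    obtain ⟨V', hV', hCV'⟩ := hr C hC
    have hVV : V' = V := part_unique hπ hV' hV (hCV' (Finset.mem_inter.1 hx).1)
      (Finset.mem_inter.1 hx).2
    subst hVV
    rw [Finset.inter_eq_left.2 hCV']
    exact ⟨hC, hCV'⟩
  · rintro ⟨hB, hBV⟩
    exact ⟨⟨B, hB, Finset.inter_eq_left.2 hBV⟩, (hσ.1 B hB).1⟩

end Helpers

/-- for π ∈ INC(χ), the order interval [0ₙ, π] in INC(χ) is poset
isomorphic to the product of the INC(χ|_V) over the blocks V of π, via σ ↦ (σ|_V)_V. -/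
theorem INC_interval_iso_prod {n : ℕ} (χ : Fin n → Bool)
    (π : Finset (Finset (Fin n))) (hπ : INCOn Finset.univ χ π) :
    -- well defined
    (∀ σ : Finset (Finset (Fin n)), INCOn Finset.univ χ σ → Refines σ π →
      ∀ V ∈ π, INCOn V χ (restrictPart σ V)) ∧
    -- injectivity
    (∀ σ₁ σ₂ : Finset (Finset (Fin n)),
      INCOn Finset.univ χ σ₁ → Refines σ₁ π →
      INCOn Finset.univ χ σ₂ → Refines σ₂ π →
      (∀ V ∈ π, restrictPart σ₁ V = restrictPart σ₂ V) → σ₁ = σ₂) ∧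
    -- surjectivity
    (∀ f : Finset (Fin n) → Finset (Finset (Fin n)),
      (∀ V ∈ π, INCOn V χ (f V)) →
      ∃ σ : Finset (Finset (Fin n)), INCOn Finset.univ χ σ ∧ Refines σ π ∧
        ∀ V ∈ π, restrictPart σ V = f V) ∧
    -- order isomorphism (both directions)
    (∀ σ₁ σ₂ : Finset (Finset (Fin n)),
      INCOn Finset.univ χ σ₁ → Refines σ₁ π →
      INCOn Finset.univ χ σ₂ → Refines σ₂ π →
      (Refines σ₁ σ₂ ↔ ∀ V ∈ π, Refines (restrictPart σ₁ V) (restrictPart σ₂ V))) := by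
  have hrf : ∀ σ : Finset (Finset (Fin n)), INCOn Finset.univ χ σ → Refines σ π →
      ∀ V ∈ π, restrictPart σ V = σ.filter (fun B => B ⊆ V) :=
    fun σ hσ hr V hV => restrict_eq_filter hσ.1 hπ.1 hr hV
  refine ⟨?_, ?_, ?_, ?_⟩
  · -- well defined
    intro σ hσ hrefσ V hV
    rw [hrf σ hσ hrefσ V hV]
    refine ⟨⟨?_, ?_⟩, ?_, ?_⟩
    · intro B hB
      rw [Finset.mem_filter] at hB
      exact ⟨(hσ.1.1 B hB.1).1, hB.2⟩
    · intro x hx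
      obtain ⟨B, ⟨hBσ, hxB⟩, huniq⟩ := hσ.1.2 x (Finset.mem_univ x)
      obtain ⟨V', hV', hBV'⟩ := hrefσ B hBσ
      have hVV : V' = V := part_unique hπ.1 hV' hV (hBV' hxB) hx
      subst hVV
      refine ⟨B, ⟨Finset.mem_filter.2 ⟨hBσ, hBV'⟩, hxB⟩, ?_⟩
      rintro y ⟨hy, hxy⟩
      exact huniq y ⟨(Finset.mem_filter.1 hy).1, hxy⟩
    · intro Vb hVb W hW hne
      exact hσ.2.1 Vb (Finset.mem_filter.1 hVb).1 W (Finset.mem_filter.1 hW).1 hne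
    · rintro B hB ⟨W, hW, hne, s, hs, t, ht, hbd⟩ k hk
      exact hσ.2.2 B (Finset.mem_filter.1 hB).1
        ⟨W, (Finset.mem_filter.1 hW).1, hne, s, hs, t, ht, hbd⟩ k hk
  · -- injectivity
    intro σ₁ σ₂ h1 hr1 h2 hr2 heq
    have key : ∀ σ σ' : Finset (Finset (Fin n)), INCOn Finset.univ χ σ → Refines σ π →
        INCOn Finset.univ χ σ' → Refines σ' π →
        (∀ V ∈ π, restrictPart σ V = restrictPart σ' V) →
        ∀ B ∈ σ, B ∈ σ' := by
      intro σ σ' hσ hr hσ' hr' he B hB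
      obtain ⟨V, hV, hBV⟩ := hr B hB
      have h1' : B ∈ restrictPart σ V := by
        rw [hrf σ hσ hr V hV]; exact Finset.mem_filter.2 ⟨hB, hBV⟩
      rw [he V hV, hrf σ' hσ' hr' V hV] at h1'
      exact (Finset.mem_filter.1 h1').1
    ext B
    exact ⟨key σ₁ σ₂ h1 hr1 h2 hr2 heq B,
      key σ₂ σ₁ h2 hr2 h1 hr1 (fun V hV => (heq V hV).symm) B⟩
  · -- surjectivity
    intro f hf
    refine ⟨π.biUnion f, ?_⟩
    have hmem : ∀ B, B ∈ π.biUnion f ↔ ∃ V ∈ π, B ∈ f V := by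
      intro B; simp [Finset.mem_biUnion]
    have hsub : ∀ V ∈ π, ∀ B ∈ f V, B.Nonempty ∧ B ⊆ V := fun V hV => (hf V hV).1.1
    have hpart : IsPartitionOn Finset.univ (π.biUnion f) := by
      constructor
      · intro B hB
        obtain ⟨V, hV, hBV⟩ := (hmem B).1 hB
        exact ⟨(hsub V hV B hBV).1, Finset.subset_univ B⟩
      · intro x _
        obtain ⟨V, ⟨hV, hxV⟩, hVuniq⟩ := hπ.1.2 x (Finset.mem_univ x)
        obtain ⟨B, ⟨hBf, hxB⟩, hBuniq⟩ := (hf V hV).1.2 x hxV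
        refine ⟨B, ⟨(hmem B).2 ⟨V, hV, hBf⟩, hxB⟩, ?_⟩
        rintro y ⟨hy, hxy⟩
        obtain ⟨V', hV', hyf⟩ := (hmem y).1 hy
        have hVV : V' = V := hVuniq V' ⟨hV', (hsub V' hV' y hyf).2 hxy⟩
        subst hVV
        exact hBuniq y ⟨hyf, hxy⟩
    have hnc : Noncrossing (π.biUnion f) := by
      intro B hB B' hB' hne
      obtain ⟨V, hV, hBV⟩ := (hmem B).1 hB
      obtain ⟨V', hV', hBV'⟩ := (hmem B').1 hB'
      by_cases hVV : V = V'
      · subst hVV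
        exact (hf V hV).2.1 B hBV B' hBV' hne
      · rintro ⟨s₁, r₁, s₂, r₂, hs₁, hs₂, hr₁, hr₂, h12, h23, h34⟩
        exact hπ.2.1 V hV V' hV' hVV ⟨s₁, r₁, s₂, r₂,
          (hsub V hV B hBV).2 hs₁, (hsub V hV B hBV).2 hs₂,
          (hsub V' hV' B' hBV').2 hr₁, (hsub V' hV' B' hBV').2 hr₂, h12, h23, h34⟩
    have hinner : ∀ B ∈ π.biUnion f, IsInnerBlock (π.biUnion f) B → ∀ k ∈ B, χ k = false := by
      rintro B hB ⟨W, hW, hne, s, hs, t, ht, hbd⟩ k hk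
      obtain ⟨V, hV, hBV⟩ := (hmem B).1 hB
      obtain ⟨V'', hV'', hWV⟩ := (hmem W).1 hW
      by_cases hVV : V'' = V
      · subst hVV
        exact (hf V'' hV'').2.2 B hBV ⟨W, hWV, hne, s, hs, t, ht, hbd⟩ k hk
      · -- V is an inner block of π
        obtain ⟨b, hb⟩ := (hsub V hV B hBV).1
        have hbV : b ∈ V := (hsub V hV B hBV).2 hb
        have hsV : s ∈ V'' := (hsub V'' hV'' W hWV).2 hs
        have htV : t ∈ V'' := (hsub V'' hV'' W hWV).2 ht
        have hbbd := hbd b hb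
        have hVinner : IsInnerBlock π V := by
          refine ⟨V'', hV'', hVV, s, hsV, t, htV, ?_⟩
          intro v hv
          constructor
          · by_contra hvs
            push_neg at hvs
            have hvs' : v < s := lt_of_le_of_ne hvs (fun h => hVV (part_unique hπ.1 hV'' hV hsV (h ▸ hv)))
            exact hπ.2.1 V hV V'' hV'' (fun h => hVV h.symm)
              ⟨v, s, b, t, hv, hbV, hsV, htV, hvs', hbbd.1, hbbd.2⟩
          · by_contra hvt
            push_neg at hvt
            have hvt' : t < v := lt_of_le_of_ne hvt (fun h => hVV (part_unique hπ.1 hV'' hV htV (h ▸ hv)))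
            exact hπ.2.1 V'' hV'' V hV hVV
              ⟨s, b, t, v, hsV, htV, hbV, hv, hbbd.1, hbbd.2, hvt'⟩
        exact hπ.2.2 V hV hVinner k ((hsub V hV B hBV).2 hk)
    have hINC : INCOn Finset.univ χ (π.biUnion f) := ⟨hpart, hnc, hinner⟩
    have hrefb : Refines (π.biUnion f) π := by
      intro B hB
      obtain ⟨V, hV, hBV⟩ := (hmem B).1 hB
      exact ⟨V, hV, (hsub V hV B hBV).2⟩
    refine ⟨hINC, hrefb, ?_⟩
    intro V hV
    rw [hrf _ hINC hrefb V hV]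
    ext B
    rw [Finset.mem_filter, hmem B]
    constructor
    · rintro ⟨⟨V', hV', hBf⟩, hBV⟩
      have : V' = V := part_unique_of_subset hπ.1 hV' hV (hsub V' hV' B hBf).1
        (hsub V' hV' B hBf).2 hBV
      exact this ▸ hBf
    · intro hBf
      exact ⟨⟨V, hV, hBf⟩, (hsub V hV B hBf).2⟩
  · -- order isomorphism
    intro σ₁ σ₂ h1 hre1 h2 hre2
    constructor
    · intro href V hV B hB
      rw [hrf σ₁ h1 hre1 V hV, Finset.mem_filter] at hB
      obtain ⟨C, hC, hBC⟩ := href B hB.1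
      obtain ⟨V', hV', hCV'⟩ := hre2 C hC
      have : V = V' := part_unique_of_subset hπ.1 hV hV' (h1.1.1 B hB.1).1 hB.2
        (hBC.trans hCV')
      subst this
      refine ⟨C, ?_, hBC⟩
      rw [hrf σ₂ h2 hre2 V hV]
      exact Finset.mem_filter.2 ⟨hC, hCV'⟩
    · intro h B hB
      obtain ⟨V, hV, hBV⟩ := hre1 B hB
      have hB1 : B ∈ restrictPart σ₁ V := by
        rw [hrf σ₁ h1 hre1 V hV]; exact Finset.mem_filter.2 ⟨hB, hBV⟩
      obtain ⟨C, hC, hBC⟩ := h V hV B hB1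
      rw [hrf σ₂ h2 hre2 V hV, Finset.mem_filter] at hC
      exact ⟨C, hC.1, hBC⟩
end
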